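/- arXiv:1903.10483 — 3 statements merged into one kernel-verified Lean document; each statement's English description precedes it below -/
import Mathlib

section
/- Let a, b, c, d be vectors in the Euclidean plane ℝ² with ‖a‖ = ‖b‖ = ‖c‖ = ‖d‖ = 1 and b − a = d − c ≠ 0. Then either (c = a and d = b), or (c = −b and d = −a). That is, two chords of the unit circle with the same nonzero edge vector either coincide or are mirror images of one another about the diameter parallel to that edge vector. -/
/-- Two chords of the unit circle with the same nonzero edge vector either coincide
or are mirror images of one another about the diameter parallel to that edge vector:
if `a, b, c, d` are unit vectors in the plane with `b − a = d − c ≠ 0`, then either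
`c = a` and `d = b`, or `c = −b` and `d = −a`. -/
theorem equal_chords_coincide_or_mirror
    (a b c d : EuclideanSpace ℝ (Fin 2))
    (ha : ‖a‖ = 1) (hb : ‖b‖ = 1) (hc : ‖c‖ = 1) (hd : ‖d‖ = 1)
    (heq : b - a = d - c) (hne : b - a ≠ 0) :
    (c = a ∧ d = b) ∨ (c = -b ∧ d = -a) := by
  have key : ∀ x : EuclideanSpace ℝ (Fin 2), ‖x‖ = 1 → x 0 ^ 2 + x 1 ^ 2 = 1 := by
    intro x hx
    rw [EuclideanSpace.norm_eq, Real.sqrt_eq_one, Fin.sum_univ_two] at hx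
    simpa [sq_abs] using hx
  have ha' := key a ha
  have hb' := key b hb
  have hc' := key c hc
  have hd' := key d hd
  have h0 : b 0 - a 0 = d 0 - c 0 := by
    have := congrArg (fun v => v 0) heq; simpa using this
  have h1 : b 1 - a 1 = d 1 - c 1 := by
    have := congrArg (fun v => v 1) heq; simpa using this
  have hv : b 0 - a 0 ≠ 0 ∨ b 1 - a 1 ≠ 0 := by
    by_contra h
    push_neg at h
    obtain ⟨e0, e1⟩ := h
    apply hne
    ext i
    fin_cases i
    · simpa using e0
    · simpa using e1
  -- orthogonality of v = b - a with u = a + b and w = c + d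
  have o1 : (b 0 - a 0) * (a 0 + b 0) + (b 1 - a 1) * (a 1 + b 1) = 0 := by
    linear_combination hb' - ha'
  have o2 : (b 0 - a 0) * (c 0 + d 0) + (b 1 - a 1) * (c 1 + d 1) = 0 := by
    linear_combination hd' - hc' + (c 0 + d 0) * h0 + (c 1 + d 1) * h1
  -- cross product of u and w vanishes
  have hcr0 : ((a 0 + b 0) * (c 1 + d 1) - (a 1 + b 1) * (c 0 + d 0)) * (b 0 - a 0) = 0 := by
    linear_combination (c 1 + d 1) * o1 - (a 1 + b 1) * o2
  have hcr1 : ((a 0 + b 0) * (c 1 + d 1) - (a 1 + b 1) * (c 0 + d 0)) * (b 1 - a 1) = 0 := by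
    linear_combination (a 0 + b 0) * o2 - (c 0 + d 0) * o1
  have cross : (a 0 + b 0) * (c 1 + d 1) - (a 1 + b 1) * (c 0 + d 0) = 0 := by
    rcases hv with h | h
    · exact (mul_eq_zero.mp hcr0).resolve_right h
    · exact (mul_eq_zero.mp hcr1).resolve_right h
  -- equal norms of u and w
  have hS : (a 0 + b 0) ^ 2 + (a 1 + b 1) ^ 2 = (c 0 + d 0) ^ 2 + (c 1 + d 1) ^ 2 := by
    linear_combination 2 * ha' + 2 * hb' - 2 * hc' - 2 * hd'
      - (b 0 - a 0 + d 0 - c 0) * h0 - (b 1 - a 1 + d 1 - c 1) * h1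
  -- dot product squared equals norm squared (Lagrange)
  have hdotsq : ((a 0 + b 0) * (c 0 + d 0) + (a 1 + b 1) * (c 1 + d 1)) ^ 2
      = ((a 0 + b 0) ^ 2 + (a 1 + b 1) ^ 2) ^ 2 := by
    linear_combination (-(a 0 + b 0) ^ 2 - (a 1 + b 1) ^ 2) * hS
      - ((a 0 + b 0) * (c 1 + d 1) - (a 1 + b 1) * (c 0 + d 0)) * cross
  rcases sq_eq_sq_iff_eq_or_eq_neg.mp hdotsq with hdot | hdot
  · -- u = w componentwise
    left
    have hz : (a 0 + b 0 - (c 0 + d 0)) ^ 2 + (a 1 + b 1 - (c 1 + d 1)) ^ 2 = 0 := by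
      linear_combination -2 * hdot - hS
    obtain ⟨hA, hB⟩ := (add_eq_zero_iff_of_nonneg (sq_nonneg _) (sq_nonneg _)).mp hz
    have e0 : a 0 + b 0 = c 0 + d 0 := by
      have := pow_eq_zero_iff (two_ne_zero) |>.mp hA; linarith
    have e1 : a 1 + b 1 = c 1 + d 1 := by
      have := pow_eq_zero_iff (two_ne_zero) |>.mp hB; linarith
    constructor
    · ext i; fin_cases i
      · show c 0 = a 0; linarith
      · show c 1 = a 1; linarith
    · ext i; fin_cases i
      · show d 0 = b 0; linarith
      · show d 1 = b 1; linarith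
  · -- u = -w componentwise
    right
    have hz : (a 0 + b 0 + (c 0 + d 0)) ^ 2 + (a 1 + b 1 + (c 1 + d 1)) ^ 2 = 0 := by
      linear_combination 2 * hdot - hS
    obtain ⟨hA, hB⟩ := (add_eq_zero_iff_of_nonneg (sq_nonneg _) (sq_nonneg _)).mp hz
    have e0 : a 0 + b 0 = -(c 0 + d 0) := by
      have := pow_eq_zero_iff (two_ne_zero) |>.mp hA; linarith
    have e1 : a 1 + b 1 = -(c 1 + d 1) := by
      have := pow_eq_zero_iff (two_ne_zero) |>.mp hB; linarith
    constructor
    · ext i; fin_cases i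
      · show c 0 = (-b) 0; simp only [PiLp.neg_apply]; linarith
      · show c 1 = (-b) 1; simp only [PiLp.neg_apply]; linarith
    · ext i; fin_cases i
      · show d 0 = (-a) 0; simp only [PiLp.neg_apply]; linarith
      · show d 1 = (-a) 1; simp only [PiLp.neg_apply]; linarith
end

section
/- Let a, b, c, d be vectors in the Euclidean plane ℝ² with ‖a‖ = ‖b‖ = ‖c‖ = ‖d‖ = 1, whose second coordinates are all nonnegative (i.e., all four points lie on the closed upper half of the unit circle). Suppose b − a = d − c ≠ 0 and the chord from a to b is non-diametral, i.e., b ≠ −a. Then c = a and d = b. In other words, two equal (same edge vector) non-diametral chords cannot both lie in the upper half of the unit circle unless they coincide. -/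
private lemma sq_add_sq_eq_zero' {x y : ℝ} (h : x ^ 2 + y ^ 2 = 0) : x = 0 ∧ y = 0 := by
  constructor <;> nlinarith [sq_nonneg x, sq_nonneg y]

/-- Two equal (same nonzero edge vector) non-diametral chords cannot both lie in the
closed upper half of the unit circle unless they coincide: if `a, b, c, d` are unit
vectors in the plane with nonnegative second coordinates, `b − a = d − c ≠ 0`,
and `b ≠ −a`, then `c = a` and `d = b`. -/
theorem equal_nondiametral_upper_chords_coincide
    (a b c d : EuclideanSpace ℝ (Fin 2))
    (ha : ‖a‖ = 1) (hb : ‖b‖ = 1) (hc : ‖c‖ = 1) (hd : ‖d‖ = 1)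
    (ha' : 0 ≤ a 1) (hb' : 0 ≤ b 1) (hc' : 0 ≤ c 1) (hd' : 0 ≤ d 1)
    (heq : b - a = d - c) (hne : b - a ≠ 0) (hnd : b ≠ -a) :
    c = a ∧ d = b := by
  have sq : ∀ x : EuclideanSpace ℝ (Fin 2), ‖x‖ = 1 → x 0 ^ 2 + x 1 ^ 2 = 1 := by
    intro x hx
    have h : ‖x‖ ^ 2 = x 0 ^ 2 + x 1 ^ 2 := by
      rw [EuclideanSpace.norm_eq, Real.sq_sqrt (by positivity)]
      simp [Fin.sum_univ_two, sq_abs]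
    rw [hx] at h; linarith
  have Ha := sq a ha
  have Hb := sq b hb
  have Hc := sq c hc
  have Hd := sq d hd
  have h0 : b 0 - a 0 = d 0 - c 0 := by have := congrArg (fun x => x 0) heq; simpa using this
  have h1 : b 1 - a 1 = d 1 - c 1 := by have := congrArg (fun x => x 1) heq; simpa using this
  -- the edge vector is nonzero
  have hv : ¬ (b 0 - a 0 = 0 ∧ b 1 - a 1 = 0) := by
    rintro ⟨e0, e1⟩
    exact hne (by ext i; fin_cases i <;> simp <;> linarith)
  -- orthogonality of the edge vector to both midpoint (sum) vectors
  have o1 : (b 0 - a 0) * (a 0 + b 0) + (b 1 - a 1) * (a 1 + b 1) = 0 := by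
    linear_combination Hb - Ha
  have o2 : (b 0 - a 0) * (c 0 + d 0) + (b 1 - a 1) * (c 1 + d 1) = 0 := by
    rw [h0, h1]; linear_combination Hd - Hc
  -- hence the two sum vectors are parallel (cross product vanishes)
  have e1 : (b 0 - a 0) * ((a 0 + b 0) * (c 1 + d 1) - (a 1 + b 1) * (c 0 + d 0)) = 0 := by
    linear_combination (c 1 + d 1) * o1 - (a 1 + b 1) * o2
  have e2 : (b 1 - a 1) * ((a 0 + b 0) * (c 1 + d 1) - (a 1 + b 1) * (c 0 + d 0)) = 0 := by
    linear_combination (a 0 + b 0) * o2 - (c 0 + d 0) * o1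
  have cross : (a 0 + b 0) * (c 1 + d 1) - (a 1 + b 1) * (c 0 + d 0) = 0 := by
    by_cases hp : b 0 - a 0 = 0
    · have hq : b 1 - a 1 ≠ 0 := fun h => hv ⟨hp, h⟩
      exact (mul_eq_zero.mp e2).resolve_left hq
    · exact (mul_eq_zero.mp e1).resolve_left hp
  -- the two sum vectors have equal norms (parallelogram law)
  have hnorm : (a 0 + b 0) ^ 2 + (a 1 + b 1) ^ 2 = (c 0 + d 0) ^ 2 + (c 1 + d 1) ^ 2 := by
    linear_combination 2 * Ha + 2 * Hb - 2 * Hc - 2 * Hd -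
      (b 0 - a 0 + (d 0 - c 0)) * h0 - (b 1 - a 1 + (d 1 - c 1)) * h1
  -- so the dot product of the sums is ± the common square norm
  have key : ((a 0 + b 0) * (c 0 + d 0) + (a 1 + b 1) * (c 1 + d 1) -
        ((a 0 + b 0) ^ 2 + (a 1 + b 1) ^ 2)) *
      ((a 0 + b 0) * (c 0 + d 0) + (a 1 + b 1) * (c 1 + d 1) +
        ((a 0 + b 0) ^ 2 + (a 1 + b 1) ^ 2)) = 0 := by
    linear_combination (-((a 0 + b 0) * (c 1 + d 1) - (a 1 + b 1) * (c 0 + d 0))) * cross -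
      ((a 0 + b 0) ^ 2 + (a 1 + b 1) ^ 2) * hnorm
  rcases mul_eq_zero.mp key with hdot | hdot
  · -- dot = +‖s‖² : the sum vectors coincide, so the chords coincide
    have hss : (c 0 + d 0 - (a 0 + b 0)) ^ 2 + (c 1 + d 1 - (a 1 + b 1)) ^ 2 = 0 := by
      linear_combination -2 * hdot - hnorm
    obtain ⟨u0, u1⟩ := sq_add_sq_eq_zero' hss
    have s0 : c 0 + d 0 = a 0 + b 0 := by linarith
    have s1 : c 1 + d 1 = a 1 + b 1 := by linarith
    constructor
    · ext i; fin_cases i <;> simp <;> linarith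
    · ext i; fin_cases i <;> simp <;> linarith
  · -- dot = −‖s‖² : then c = −b and d = −a, forcing everything onto the x-axis
    have hss : (c 0 + d 0 + (a 0 + b 0)) ^ 2 + (c 1 + d 1 + (a 1 + b 1)) ^ 2 = 0 := by
      linear_combination 2 * hdot - hnorm
    obtain ⟨u0, u1⟩ := sq_add_sq_eq_zero' hss
    have s0 : c 0 + d 0 = -(a 0 + b 0) := by linarith
    have s1 : c 1 + d 1 = -(a 1 + b 1) := by linarith
    -- c = -b, d = -a on the second coordinate
    have hc1 : c 1 = -b 1 := by linarith
    have hd1 : d 1 = -a 1 := by linarith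
    have hb1 : b 1 = 0 := le_antisymm (by linarith [hc']) hb'
    have ha1 : a 1 = 0 := le_antisymm (by linarith [hd']) ha'
    have hp : b 0 - a 0 ≠ 0 := by
      intro h; exact hv ⟨h, by rw [ha1, hb1]; ring⟩
    have hb0 : b 0 = -a 0 := by
      have : (b 0 - a 0) * (b 0 + a 0) = 0 := by linear_combination Hb - Ha - b 1 * hb1 + a 1 * ha1
      have := (mul_eq_zero.mp this).resolve_left hp
      linarith
    exact absurd (by ext i; fin_cases i <;> simp <;> linarith) hnd
end

section
/- Fix an integer n ≥ 1 and define points p_k = (cos(kπ/n), sin(kπ/n)) ∈ ℝ² for k = 0, 1, …, n−1 (n equally spaced points on the upper half of the unit circle starting at (1,0)). Then the assignment of edge vectors to ordered pairs is injective: for indices 0 ≤ i, j, k, l ≤ n−1 with i ≠ j and k ≠ l, if p_j − p_i = p_l − p_k then i = k and j = l. -/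
set_option maxHeartbeats 1000000

open Real Complex

lemma two_cos_mul_exp (m d : ℂ) :
    Complex.exp ((m + d) * Complex.I) + Complex.exp ((m - d) * Complex.I) =
      2 * Complex.cos d * Complex.exp (m * Complex.I) := by
  simp only [Complex.cos, add_mul, sub_mul, sub_eq_add_neg, Complex.exp_add, neg_mul]
  ring

lemma sum_exp_aux (x y : ℝ) :
    Complex.exp (x * Complex.I) + Complex.exp (y * Complex.I) =
      2 * Real.cos ((x - y) / 2) *
        Complex.exp ((((x + y) / 2 : ℝ)) * Complex.I) := by
  have hx : (x : ℂ) = (((x + y) / 2 : ℝ) : ℂ) + (((x - y) / 2 : ℝ) : ℂ) := by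
    push_cast; ring
  have hy : (y : ℂ) = (((x + y) / 2 : ℝ) : ℂ) - (((x - y) / 2 : ℝ) : ℂ) := by
    push_cast; ring
  rw [hx, hy, two_cos_mul_exp, Complex.ofReal_cos]

lemma cancel_mul_pos {x a b : ℝ} (hx : 0 < x) (h : a * x = b * x) : a = b :=
  mul_right_cancel₀ hx.ne' h

/-- For `n` equally spaced points `p k = (cos(kπ/n), sin(kπ/n))`, `k = 0, …, n−1`, on the
upper half of the unit circle, the assignment of edge vectors to ordered pairs is
injective: if `i ≠ j`, `k ≠ l` and `p j − p i = p l − p k` then `i = k` and `j = l`. -/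
theorem edge_vectors_injective
    (n : ℕ) (hn : 1 ≤ n)
    (p : ℕ → ℝ × ℝ)
    (hp : ∀ k : ℕ, p k = (Real.cos (k * Real.pi / n), Real.sin (k * Real.pi / n)))
    (i j k l : ℕ) (hi : i < n) (hj : j < n) (hk : k < n) (hl : l < n)
    (hij : i ≠ j) (hkl : k ≠ l)
    (h : p j - p i = p l - p k) :
    i = k ∧ j = l := by
  have hπ := Real.pi_pos
  have hn0 : (0 : ℝ) < n := by exact_mod_cast Nat.lt_of_lt_of_le Nat.zero_lt_one hn
  have hπn : 0 < Real.pi / n := div_pos hπ hn0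
  have hθmem : ∀ m : ℕ, m < n → 0 ≤ (m : ℝ) * Real.pi / n ∧ (m : ℝ) * Real.pi / n < Real.pi := by
    intro m hm
    refine ⟨by positivity, ?_⟩
    rw [div_lt_iff₀ hn0]
    have : (m : ℝ) < n := by exact_mod_cast hm
    nlinarith
  obtain ⟨hθi0, hθiπ⟩ := hθmem i hi
  obtain ⟨hθj0, hθjπ⟩ := hθmem j hj
  obtain ⟨hθk0, hθkπ⟩ := hθmem k hk
  obtain ⟨hθl0, hθlπ⟩ := hθmem l hl
  rw [hp, hp, hp, hp, Prod.ext_iff] at h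
  simp only [Prod.fst_sub, Prod.snd_sub] at h
  obtain ⟨h1, h2⟩ := h
  set a : ℝ := (i : ℝ) * Real.pi / n with ha
  set b : ℝ := (j : ℝ) * Real.pi / n with hb
  set c : ℝ := (k : ℝ) * Real.pi / n with hc
  set d : ℝ := (l : ℝ) * Real.pi / n with hd
  have hC : Complex.exp (b * Complex.I) + Complex.exp (c * Complex.I) =
      Complex.exp (d * Complex.I) + Complex.exp (a * Complex.I) := by
    apply Complex.ext <;>
      simp only [Complex.add_re, Complex.add_im, Complex.exp_ofReal_mul_I_re,
        Complex.exp_ofReal_mul_I_im] <;> linarith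
  rw [sum_exp_aux, sum_exp_aux] at hC
  have hcd1 : 0 < Real.cos ((b - c) / 2) := by
    apply Real.cos_pos_of_mem_Ioo
    constructor <;> nlinarith
  have hcd2 : 0 < Real.cos ((d - a) / 2) := by
    apply Real.cos_pos_of_mem_Ioo
    constructor <;> nlinarith
  -- moduli equal
  have habs := congrArg (‖·‖) hC
  simp only [norm_mul, Complex.norm_exp_ofReal_mul_I, Complex.norm_real, Real.norm_eq_abs, Complex.norm_two,
    mul_one, abs_of_pos hcd1, abs_of_pos hcd2] at habs
  have hcos : Real.cos ((b - c) / 2) = Real.cos ((d - a) / 2) := by linarith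
  -- directions equal
  have hexp : Complex.exp ((((b + c) / 2 : ℝ) : ℂ) * Complex.I) =
      Complex.exp ((((d + a) / 2 : ℝ) : ℂ) * Complex.I) := by
    have hne : (2 : ℂ) * (Real.cos ((d - a) / 2) : ℂ) ≠ 0 := by
      simp only [ne_eq, mul_eq_zero, OfNat.ofNat_ne_zero, false_or]
      exact_mod_cast hcd2.ne'
    apply mul_left_cancel₀ hne
    rw [← hC, hcos]
  rw [Complex.exp_eq_exp_iff_exists_int] at hexp
  obtain ⟨t, ht⟩ := hexp
  have him : (b + c) / 2 = (d + a) / 2 + (t : ℝ) * (2 * Real.pi) := by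
    have := congrArg Complex.im ht
    have e1 : ((((b + c) / 2 : ℝ) : ℂ) * Complex.I).im = (b + c) / 2 := by simp
    have e2 : ((((d + a) / 2 : ℝ) : ℂ) * Complex.I + (t : ℂ) * (2 * Real.pi * Complex.I)).im
        = (d + a) / 2 + (t : ℝ) * (2 * Real.pi) := by
      simp [Complex.add_im, Complex.mul_im]
    rw [e1, e2] at this
    exact this
  have ht0 : (t : ℝ) = 0 := by
    rcases lt_trichotomy t 0 with h' | h' | h'
    · have h'' : t ≤ -1 := by omega
      have : (t : ℝ) ≤ -1 := by exact_mod_cast h''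
      nlinarith
    · exact_mod_cast congrArg (Int.cast : ℤ → ℝ) h'
    · have : (1 : ℝ) ≤ (t : ℝ) := by exact_mod_cast h'
      nlinarith
  have hmm : b + c = d + a := by rw [ht0] at him; linarith
  -- j + k = l + i
  have hsum : (j : ℝ) + k = (l : ℝ) + i := by
    rw [ha, hb, hc, hd] at hmm
    field_simp at hmm
    exact cancel_mul_pos hπ (by linear_combination Real.pi * hmm : ((j : ℝ) + k) * Real.pi = ((l : ℝ) + i) * Real.pi)
  -- |(b-c)/2| = |(d-a)/2|
  have habs' : |(b - c) / 2| = |(d - a) / 2| := by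
    apply Real.injOn_cos
    · exact ⟨abs_nonneg _, by rw [abs_le]; constructor <;> nlinarith⟩
    · exact ⟨abs_nonneg _, by rw [abs_le]; constructor <;> nlinarith⟩
    · rw [Real.cos_abs, Real.cos_abs, hcos]
  rcases abs_eq_abs.mp habs' with hcase | hcase
  · -- b - c = d - a : j - k = l - i, combined with j + k = l + i gives j = l, k = i
    have hdiff : (j : ℝ) - k = (l : ℝ) - i := by
      rw [ha, hb, hc, hd] at hcase
      field_simp at hcase
      exact cancel_mul_pos hπ (by linear_combination Real.pi * hcase : ((j : ℝ) - k) * Real.pi = ((l : ℝ) - i) * Real.pi)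
    have hjl : (j : ℝ) = l := by linarith
    have hki : (k : ℝ) = i := by linarith
    exact ⟨by exact_mod_cast hki.symm, by exact_mod_cast hjl⟩
  · -- b - c = -(d - a) : j - k = i - l, combined with j + k = l + i gives j = i
    have hdiff : (j : ℝ) - k = (i : ℝ) - l := by
      rw [ha, hb, hc, hd] at hcase
      field_simp at hcase
      exact cancel_mul_pos hπ (by linear_combination Real.pi * hcase : ((j : ℝ) - k) * Real.pi = ((i : ℝ) - l) * Real.pi)
    have : (j : ℝ) = i := by linarith
    exact absurd (by exact_mod_cast this.symm) hij
end
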